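/- For all real a > 0, b > 0, δ > 0, c ≥ 0 and t > 0, the integral L₁(a,b,c,δ,t) = ∫_t^∞ x^c e^{−δx} [1 − (1 + b + bx + b²x²/2) e^{−bx}/(1+b)]^{a−1} dx converges and equals Σ_{i=0}^∞ Σ_{j=0}^{i} Σ_{k=0}^{j} Σ_{l=0}^{k} C(a−1, i) C(i, j) C(j, k) C(k, l) (−1)^i b^j (b/2)^l Γ(c+k+l+1, t(b i + δ)) / (b i + δ)^{c+k+l+1}, where the series over i converges. -/

import Mathlib

open Real MeasureTheory Set Filter Topology

/-- The xgamma CDF bracket: `U θ x = 1 - (1 + θ + θx + θ²x²/2) e^{-θx}/(1+θ)`. -/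
noncomputable def U (θ x : ℝ) : ℝ :=
  1 - (1 + θ + θ * x + θ ^ 2 * x ^ 2 / 2) * Real.exp (-θ * x) / (1 + θ)

/-- Generalized binomial coefficient `C(a, i) = a(a-1)⋯(a-i+1)/i!`. -/
noncomputable def genChoose (a : ℝ) (i : ℕ) : ℝ :=
  (∏ j ∈ Finset.range i, (a - j)) / (Nat.factorial i)

/-- Upper incomplete gamma function `Γ(s, x) = ∫_x^∞ u^{s-1} e^{-u} du`. -/
noncomputable def uGamma (s x : ℝ) : ℝ :=
  ∫ u in Set.Ioi x, u ^ (s - 1) * Real.exp (-u)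

/-- The `i`-th term (a triple finite sum) of the series for `L₁(a,b,c,δ,t)`. -/
noncomputable def L1term (a b c δ t : ℝ) (i : ℕ) : ℝ :=
  ∑ j ∈ Finset.range (i + 1), ∑ k ∈ Finset.range (j + 1), ∑ l ∈ Finset.range (k + 1),
    genChoose (a - 1) i * (i.choose j) * (j.choose k) * (k.choose l) *
      (-1 : ℝ) ^ i * b ^ j * (b / 2) ^ l *
      uGamma (c + k + l + 1) (t * (b * i + δ)) /
      ((1 + b) ^ i * (b * i + δ) ^ (c + (k : ℝ) + l + 1))


section Helpers

lemma genChoose_succ' (r : ℝ) (i : ℕ) :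
    genChoose r (i+1) = genChoose r i * (r - i) / (i+1) := by
  have h3 : ((i+1).factorial : ℝ) = ((i:ℝ)+1) * i.factorial := by
    push_cast [Nat.factorial_succ]; ring
  rw [genChoose, genChoose, Finset.prod_range_succ, h3, div_mul_eq_mul_div, div_div,
    mul_comm ((i:ℝ)+1)]

lemma summable_genChoose_aux (r : ℝ) {q : ℝ} (h0 : 0 ≤ q) (h1 : q < 1) :
    Summable (fun i : ℕ => |genChoose r i| * (i+1) * q^i) := by
  set f : ℕ → ℝ := fun i => |genChoose r i| * (i+1) * q^i with hf
  have hfnn : ∀ i, 0 ≤ f i := fun i => by positivity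
  set g : ℕ → ℝ := fun i => |r - i| * (i+2) * q / ((i+1)^2) with hg
  have hrec : ∀ i, f (i+1) = g i * f i := by
    intro i
    have h1 : |genChoose r (i+1)| = |genChoose r i| * |r - i| / (i+1) := by
      rw [genChoose_succ', abs_div, abs_mul]
      congr 1
      exact abs_of_pos (by positivity)
    simp only [hf, hg, h1]
    push_cast
    have : ((i:ℝ)+1) ≠ 0 := by positivity
    field_simp
    ring
  have hinv : Tendsto (fun i : ℕ => 1 / ((i:ℝ)+1)) atTop (𝓝 0) := by
    exact tendsto_one_div_add_atTop_nhds_zero_nat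
  have htend : Tendsto g atTop (𝓝 q) := by
    have habs : Tendsto (fun i : ℕ => |r - i| / ((i:ℝ)+1)) atTop (𝓝 1) := by
      have h2 : Tendsto (fun i : ℕ => (r+1) / ((i:ℝ)+1)) atTop (𝓝 0) := by
        have := hinv.const_mul (r+1)
        simpa [mul_one_div, div_eq_mul_inv] using this
      have heq : ∀ i : ℕ, |r - (i:ℝ)| / ((i:ℝ)+1) = |(r+1)/((i:ℝ)+1) - 1| := by
        intro i
        have h4 : ((i:ℝ)+1) ≠ 0 := by positivity
        have h5 : (r+1)/((i:ℝ)+1) - 1 = (r - i)/((i:ℝ)+1) := by field_simp; ring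
        rw [h5, abs_div, abs_of_pos (by positivity : (0:ℝ) < (i:ℝ)+1)]
      simp only [heq]
      have h6 : Tendsto (fun i : ℕ => |(r+1)/((i:ℝ)+1) - 1|) atTop (𝓝 |0 - 1|) :=
        ((h2.sub tendsto_const_nhds).abs)
      simpa using h6
    have hrat : Tendsto (fun i : ℕ => ((i:ℝ)+2) / ((i:ℝ)+1)) atTop (𝓝 1) := by
      have heq : ∀ i : ℕ, ((i:ℝ)+2) / ((i:ℝ)+1) = 1 + 1/((i:ℝ)+1) := by
        intro i
        have h4 : ((i:ℝ)+1) ≠ 0 := by positivity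
        field_simp
        ring
      simp only [heq]
      simpa using (tendsto_const_nhds.add hinv)
    have h7 : Tendsto (fun i : ℕ => (|r - i| / ((i:ℝ)+1)) * (((i:ℝ)+2) / ((i:ℝ)+1)) * q)
        atTop (𝓝 (1 * 1 * q)) := (habs.mul hrat).mul tendsto_const_nhds
    have heq : ∀ i : ℕ, (|r - i| / ((i:ℝ)+1)) * (((i:ℝ)+2) / ((i:ℝ)+1)) * q = g i := by
      intro i
      simp only [hg]
      rw [div_mul_div_comm, div_mul_eq_mul_div, sq]
    rw [show (1:ℝ) * 1 * q = q by ring] at h7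
    exact h7.congr heq
  refine summable_of_ratio_norm_eventually_le (r := (1+q)/2) (by linarith) ?_
  have hev : ∀ᶠ i in atTop, g i ≤ (1+q)/2 :=
    htend.eventually_le_const (by linarith)
  filter_upwards [hev] with i hi
  rw [Real.norm_eq_abs, Real.norm_eq_abs, abs_of_nonneg (hfnn _), abs_of_nonneg (hfnn _), hrec i]
  exact mul_le_mul_of_nonneg_right hi (hfnn i)

lemma hasSum_genChoose (r : ℝ) {y : ℝ} (hy0 : 0 ≤ y) (hy1 : y < 1) :
    HasSum (fun i : ℕ => genChoose r i * (-y)^i) ((1 - y) ^ r) := by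
  rcases eq_or_lt_of_le hy0 with h | hy0'
  · -- y = 0
    rw [← h]
    have : HasSum (fun i : ℕ => genChoose r i * (-(0:ℝ))^i) (genChoose r 0 * (-(0:ℝ))^0) := by
      apply hasSum_single
      intro i hi
      simp [zero_pow hi]
    simpa [genChoose] using this
  set s : Set ℝ := Icc 0 y with hs
  have huniq : UniqueDiffOn ℝ s := uniqueDiffOn_Icc hy0'
  set g : ℝ → ℝ := fun x => (1 - x) ^ r with hgdef
  set D : ℕ → ℝ → ℝ := fun n x => (-1)^n * (∏ j ∈ Finset.range n, (r - j)) * (1 - x) ^ (r - n)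
    with hDdef
  have hmem : ∀ x ∈ s, 0 < 1 - x := by
    rintro x ⟨hx0, hxy⟩
    linarith
  -- derivative of D n
  have hD_deriv : ∀ (n : ℕ), ∀ x ∈ s, HasDerivAt (D n) (D (n+1) x) x := by
    intro n x hx
    have h1x : (1:ℝ) - x ≠ 0 := ne_of_gt (hmem x hx)
    have hbase : HasDerivAt (fun z : ℝ => 1 - z) (-1) x := by
      simpa using (hasDerivAt_id x).const_sub 1
    have h2 : HasDerivAt (fun z : ℝ => (1 - z) ^ (r - n))
        (-1 * (r - n) * (1 - x) ^ (r - n - 1)) x :=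
      hbase.rpow_const (Or.inl h1x)
    have h3 := h2.const_mul ((-1:ℝ)^n * (∏ j ∈ Finset.range n, (r - j)))
    refine h3.congr_deriv ?_; symm
    simp only [hDdef, Finset.prod_range_succ]
    rw [show r - (n+1:ℕ) = r - n - 1 by push_cast; ring]
    push_cast
    ring
  -- iterated derivatives
  have hEq : ∀ n : ℕ, EqOn (iteratedDerivWithin n g s) (D n) s := by
    intro n
    induction n with
    | zero =>
      intro x hx
      simp [iteratedDerivWithin_zero, hDdef, hgdef]
    | succ n ih =>
      intro x hx
      rw [iteratedDerivWithin_succ,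
        derivWithin_congr ih (ih hx)]
      exact ((hD_deriv n x hx).hasDerivWithinAt).derivWithin (huniq.uniqueDiffWithinAt hx)
  have hcont : ∀ n : ℕ, ContDiffOn ℝ n g s := by
    intro n x hx
    have h1x : (1:ℝ) - x ≠ 0 := ne_of_gt (hmem x hx)
    have h1 : ContDiffAt ℝ n (fun z : ℝ => z ^ r) (1 - x) :=
      Real.contDiffAt_rpow_const_of_ne h1x
    exact (h1.comp x ((contDiff_const.sub contDiff_id).contDiffAt)).contDiffWithinAt
  have hdiff : ∀ n : ℕ, DifferentiableOn ℝ (iteratedDerivWithin n g s) (Ioo 0 y) := by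
    intro n
    have hD : DifferentiableOn ℝ (D n) (Ioo 0 y) := fun x hx =>
      ((hD_deriv n x (Ioo_subset_Icc_self hx)).differentiableAt).differentiableWithinAt
    exact hD.congr fun x hx => hEq n (Ioo_subset_Icc_self hx)
  -- Taylor polynomial values
  have htaylor : ∀ n : ℕ, taylorWithinEval g n s 0 y
      = ∑ i ∈ Finset.range (n+1), genChoose r i * (-y)^i := by
    intro n
    rw [taylor_within_apply]
    refine Finset.sum_congr rfl fun k _ => ?_
    have h0s : (0:ℝ) ∈ s := ⟨le_refl 0, le_of_lt hy0'⟩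
    rw [hEq k h0s]
    simp only [hDdef, genChoose, sub_zero, Real.one_rpow, smul_eq_mul, mul_one]
    rw [neg_pow]
    ring
  set C : ℝ := max 1 ((1 - y) ^ (r - 1)) with hC
  have hC0 : (0:ℝ) < C := lt_of_lt_of_le one_pos (le_max_left _ _)
  have hbound : ∀ n : ℕ, |g y - taylorWithinEval g n s 0 y|
      ≤ |genChoose r (n+1)| * (n+1) * y^(n+1) * C := by
    intro n
    obtain ⟨x', hx', hrem⟩ := taylor_mean_remainder_cauchy (f := g) (n := n) (ne_of_lt hy0')
      (by rw [uIcc_of_le hy0'.le]; exact hcont n)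
      (by rw [uIcc_of_le hy0'.le, uIoo_of_le hy0'.le]; exact hdiff n)
    rw [uIoo_of_le hy0'.le] at hx'
    rw [uIcc_of_le hy0'.le] at hrem
    rw [← hs] at hrem
    obtain ⟨hx'0, hx'y⟩ := hx'
    have hx's : x' ∈ s := ⟨le_of_lt hx'0, le_of_lt hx'y⟩
    have h1x' : (0:ℝ) < 1 - x' := by rw [hs] at hx's; obtain ⟨_, h2⟩ := hx's; linarith
    have hyx' : (0:ℝ) ≤ y - x' := by linarith
    rw [hrem, hEq (n+1) hx's]
    have hfac : (0:ℝ) < (n.factorial : ℝ) := by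
      exact_mod_cast Nat.factorial_pos n
    -- key estimate on |D (n+1) x'| * (y - x')^n
    have hDval : |D (n+1) x'| * (y - x')^n
        ≤ |∏ j ∈ Finset.range (n+1), (r - j)| * C * y^n := by
      have h1 : |D (n+1) x'| = |∏ j ∈ Finset.range (n+1), (r - j)| * (1 - x') ^ (r - (n+1:ℕ)) := by
        simp only [hDdef]
        rw [abs_mul, abs_mul, abs_pow, abs_neg, abs_one, one_pow, one_mul,
          abs_of_nonneg (Real.rpow_nonneg (le_of_lt h1x') _)]
      have hsplit : (1 - x') ^ (r - ((n+1:ℕ):ℝ)) = (1 - x')^(r-1) / ((1 - x')^(n:ℕ)) := by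
        rw [show (r - ((n+1:ℕ):ℝ)) = (r-1) - (n:ℕ) by push_cast; ring,
          Real.rpow_sub h1x', Real.rpow_natCast]
      have hratio : (y - x') / (1 - x') ≤ y := by
        rw [div_le_iff₀ h1x']
        nlinarith
      have hCb : (1 - x')^(r-1) ≤ C := by
        rcases le_or_gt 0 (r-1) with hr | hr
        · refine le_trans ?_ (le_max_left _ _)
          calc (1 - x')^(r-1) ≤ (1:ℝ)^(r-1) :=
                Real.rpow_le_rpow (le_of_lt h1x') (by linarith) hr
            _ = 1 := Real.one_rpow _
        · refine le_trans ?_ (le_max_right _ _)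
          exact Real.rpow_le_rpow_of_nonpos (by linarith) (by linarith) (le_of_lt hr)
      calc |D (n+1) x'| * (y - x')^n
          = |∏ j ∈ Finset.range (n+1), (r - j)| * (1 - x')^(r-1) * ((y - x')/(1 - x'))^n := by
            rw [h1, hsplit, div_pow]
            field_simp
        _ ≤ |∏ j ∈ Finset.range (n+1), (r - j)| * C * y^n := by
            gcongr <;> first
              | exact abs_nonneg _
              | exact div_nonneg hyx' (le_of_lt h1x')
              | exact hratio
              | exact hCb
    have hgc : |∏ j ∈ Finset.range (n+1), (r - j)| = |genChoose r (n+1)| * (n+1) * n.factorial := by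
      have h2 : genChoose r (n+1) * ((n+1) * n.factorial) = ∏ j ∈ Finset.range (n+1), (r - j) := by
        rw [genChoose]
        have h3 : (((n+1).factorial : ℕ) : ℝ) = ((n:ℝ)+1) * n.factorial := by
          push_cast [Nat.factorial_succ]; ring
        rw [h3]
        field_simp
      rw [← h2, abs_mul, abs_of_nonneg (by positivity : (0:ℝ) ≤ ((n:ℝ)+1) * n.factorial)]
      ring
    calc |D (n+1) x' * (y - x')^n / n.factorial * (y - 0)|
        = |D (n+1) x'| * (y - x')^n / n.factorial * y := by
          rw [sub_zero, abs_mul, abs_div, abs_mul,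
            abs_of_nonneg (pow_nonneg hyx' n), abs_of_nonneg (le_of_lt hfac),
            abs_of_nonneg (le_of_lt hy0')]
      _ ≤ (|∏ j ∈ Finset.range (n+1), (r - j)| * C * y^n) / n.factorial * y := by
          gcongr
      _ = |genChoose r (n+1)| * (n+1) * y^(n+1) * C := by
          rw [hgc]
          field_simp
          ring
  -- summability
  have hsummable := summable_genChoose_aux r hy0 hy1
  have hnorm_sum : Summable (fun i : ℕ => ‖genChoose r i * (-y)^i‖) := by
    refine Summable.of_nonneg_of_le (fun i => norm_nonneg _) (fun i => ?_) hsummable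
    rw [Real.norm_eq_abs, abs_mul, abs_pow, abs_neg, abs_of_nonneg hy0]
    exact mul_le_mul_of_nonneg_right
      (le_mul_of_one_le_right (abs_nonneg _) (le_add_of_nonneg_left (Nat.cast_nonneg i)))
      (pow_nonneg hy0 i)
  -- limit of partial sums
  set S : ℕ → ℝ := fun m => ∑ i ∈ Finset.range m, genChoose r i * (-y)^i with hS
  have ht2 : Tendsto (fun n : ℕ => |genChoose r (n+1)| * ((n+1:ℕ)+1) * y^(n+1)) atTop (𝓝 0) :=
    hsummable.tendsto_atTop_zero.comp (tendsto_add_atTop_nat 1)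
  have htend0 : Tendsto (fun n : ℕ => (|genChoose r (n+1)| * ((n+1:ℕ)+1) * y^(n+1)) * C)
      atTop (𝓝 0) := by
    simpa using ht2.mul_const C
  have hdiff0 : Tendsto (fun n : ℕ => g y - S (n+1)) atTop (𝓝 0) := by
    refine squeeze_zero_norm (fun n => ?_) htend0
    rw [Real.norm_eq_abs]
    have h4 := hbound n
    rw [htaylor n] at h4
    refine h4.trans ?_
    gcongr <;> first
      | exact abs_nonneg _
      | (push_cast; linarith [Nat.cast_nonneg (α := ℝ) n])
  have htS : Tendsto (fun n : ℕ => S (n+1)) atTop (𝓝 (g y)) := by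
    have h7 : Tendsto (fun n : ℕ => g y - (g y - S (n+1))) atTop (𝓝 (g y - 0)) :=
      Tendsto.sub tendsto_const_nhds hdiff0
    simpa using h7
  have htS' : Tendsto S atTop (𝓝 (g y)) := (tendsto_add_atTop_iff_nat 1).mp htS
  exact (hasSum_iff_tendsto_nat_of_summable_norm hnorm_sum).mpr htS'

lemma integrableOn_rpow_exp {s μ T : ℝ} (hs : 0 ≤ s) (hμ : 0 < μ) (hT : 0 < T) :
    IntegrableOn (fun x : ℝ => x ^ s * Real.exp (-(μ * x))) (Ioi T) := by
  have h1 : IntegrableOn (fun u : ℝ => u ^ s * Real.exp (-u)) (Ioi (μ * T)) := by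
    have h2 := Real.GammaIntegral_convergent (s := s+1) (by linarith)
    have h3 : IntegrableOn (fun u : ℝ => Real.exp (-u) * u ^ (s+1-1)) (Ioi (μ*T)) :=
      h2.mono_set (Ioi_subset_Ioi (by positivity))
    refine h3.congr_fun (fun u _ => ?_) measurableSet_Ioi
    rw [add_sub_cancel_right, mul_comm]
  have h4 : IntegrableOn (fun x : ℝ => (μ*x) ^ s * Real.exp (-(μ*x))) (Ioi T) :=
    (integrableOn_Ioi_comp_mul_left_iff (fun u : ℝ => u ^ s * Real.exp (-u)) T hμ).mpr h1
  have h5 : IntegrableOn (fun x : ℝ => (μ ^ s)⁻¹ * ((μ*x) ^ s * Real.exp (-(μ*x)))) (Ioi T) :=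
    h4.const_mul ((μ ^ s)⁻¹)
  refine (h5.congr_fun (fun x hx => ?_) measurableSet_Ioi)
  have hx0 : (0:ℝ) < x := lt_trans hT hx
  have hμs : μ ^ s ≠ 0 := by positivity
  beta_reduce
  rw [Real.mul_rpow (le_of_lt hμ) (le_of_lt hx0)]
  field_simp

lemma integral_rpow_exp {s μ T : ℝ} (hs : 0 ≤ s) (hμ : 0 < μ) (hT : 0 < T) :
    ∫ x in Ioi T, x ^ s * Real.exp (-(μ * x)) = uGamma (s+1) (μ*T) / μ^(s+1) := by
  have key := integral_comp_mul_left_Ioi (fun u : ℝ => u ^ s * Real.exp (-u)) T hμ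
  have hG : uGamma (s+1) (μ*T) = ∫ u in Ioi (μ*T), u ^ s * Real.exp (-u) := by
    rw [uGamma, add_sub_cancel_right]
  have hL : ∫ x in Ioi T, (μ*x) ^ s * Real.exp (-(μ*x))
      = μ ^ s * ∫ x in Ioi T, x ^ s * Real.exp (-(μ*x)) := by
    rw [← integral_const_mul]
    refine setIntegral_congr_fun measurableSet_Ioi (fun x hx => ?_)
    have hx0 : (0:ℝ) < x := lt_trans hT hx
    rw [Real.mul_rpow (le_of_lt hμ) (le_of_lt hx0)]
    ring
  simp only [smul_eq_mul] at key
  rw [hL] at key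
  have hμs : μ ^ s ≠ 0 := by positivity
  have hpow : μ ^ (s+1) = μ ^ s * μ := by
    rw [Real.rpow_add hμ, Real.rpow_one]
  rw [hG, hpow]
  field_simp at key ⊢
  linarith [key]

lemma trinomial_pow (b x : ℝ) (i : ℕ) :
    (1 + b + b*x + b^2*x^2/2)^i
    = ∑ j ∈ Finset.range (i+1), ∑ k ∈ Finset.range (j+1), ∑ l ∈ Finset.range (k+1),
        (i.choose j : ℝ) * (j.choose k) * (k.choose l) * b^j * (b/2)^l * x^(k+l) := by
  have key : ∀ k : ℕ, (x + b*x^2/2)^k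
      = ∑ l ∈ Finset.range (k+1), (k.choose l : ℝ) * (b/2)^l * x^(k+l) := by
    intro k
    rw [show x + b*x^2/2 = b*x^2/2 + x by ring, add_pow]
    refine Finset.sum_congr rfl fun l hl => ?_
    have hlk : l ≤ k := Nat.lt_succ_iff.mp (Finset.mem_range.mp hl)
    have h2 : (b*x^2/2)^l * x^(k-l) = (b/2)^l * x^(k+l) := by
      rw [show b*x^2/2 = (b/2)*x^2 by ring, mul_pow, ← pow_mul, mul_assoc, ← pow_add,
        show 2*l + (k-l) = k + l by omega]
    rw [h2]
    ring
  rw [show (1 + b + b*x + b^2*x^2/2) = b*((x + b*x^2/2) + 1) + 1 by ring, add_pow]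
  refine Finset.sum_congr rfl fun j hj => ?_
  rw [one_pow, mul_one, mul_pow, add_pow]
  simp only [one_pow, mul_one, Finset.mul_sum, Finset.sum_mul]
  refine Finset.sum_congr rfl fun k hk => ?_
  rw [key k]
  simp only [Finset.mul_sum, Finset.sum_mul]
  refine Finset.sum_congr rfl fun l hl => ?_
  ring

lemma P_exp_mono {b t x : ℝ} (hb : 0 < b) (ht : 0 ≤ t) (htx : t ≤ x) :
    (1 + b + b*x + b^2*x^2/2) * Real.exp (-(b*x))
      ≤ (1 + b + b*t + b^2*t^2/2) * Real.exp (-(b*t)) := by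
  have hh : (0:ℝ) ≤ x - t := sub_nonneg.mpr htx
  have hPt : (0:ℝ) ≤ 1 + b + b*t + b^2*t^2/2 := by nlinarith
  have hq := Real.quadratic_le_exp_of_nonneg (x := b*(x - t)) (by positivity)
  have h1 : (1 + b + b*x + b^2*x^2/2)
      ≤ (1 + b + b*t + b^2*t^2/2) * Real.exp (b*(x-t)) := by
    have expand : (1 + b + b*t + b^2*t^2/2) * (1 + b*(x-t) + (b*(x-t))^2/2)
        - (1 + b + b*x + b^2*x^2/2)
        = b^2*(x-t) + b^3*t^2*(x-t)/2 + (b^2*(x-t)^2/2)*(b + b*t + b^2*t^2/2) := by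
      ring
    have e1 : (0:ℝ) ≤ b^2*(x-t) := mul_nonneg (by positivity) hh
    have e2 : (0:ℝ) ≤ b^3*t^2*(x-t)/2 :=
      div_nonneg (mul_nonneg (mul_nonneg (by positivity) (by positivity)) hh) (by norm_num)
    have e3 : (0:ℝ) ≤ (b^2*(x-t)^2/2)*(b + b*t + b^2*t^2/2) :=
      mul_nonneg (by positivity) (by nlinarith)
    have h4 : (1 + b + b*x + b^2*x^2/2)
        ≤ (1 + b + b*t + b^2*t^2/2) * (1 + b*(x-t) + (b*(x-t))^2/2) := by linarith
    exact h4.trans (mul_le_mul_of_nonneg_left hq hPt)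
  have h2 : Real.exp (-(b*x)) = Real.exp (-(b*t)) / Real.exp (b*(x-t)) := by
    rw [← Real.exp_sub]; ring_nf
  have hepos := Real.exp_pos (b*(x-t))
  rw [h2]
  calc (1 + b + b*x + b^2*x^2/2) * (Real.exp (-(b*t)) / Real.exp (b*(x-t)))
      = (1 + b + b*x + b^2*x^2/2) / Real.exp (b*(x-t)) * Real.exp (-(b*t)) := by ring
    _ ≤ (1 + b + b*t + b^2*t^2/2) * Real.exp (-(b*t)) := by
        refine mul_le_mul_of_nonneg_right ?_ (le_of_lt (Real.exp_pos _))
        rw [div_le_iff₀ hepos]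
        exact h1

lemma P_exp_lt {b x : ℝ} (hb : 0 < b) (hx : 0 < x) :
    (1 + b + b*x + b^2*x^2/2) * Real.exp (-(b*x)) / (1+b) < 1 := by
  have hb1 : (0:ℝ) < 1 + b := by linarith
  rw [div_lt_one hb1]
  have hq := Real.quadratic_le_exp_of_nonneg (x := b*x) (by positivity)
  have h1 : (1 + b + b*x + b^2*x^2/2) < (1+b) * Real.exp (b*x) := by
    have expand : (1+b) * (1 + b*x + (b*x)^2/2) - (1 + b + b*x + b^2*x^2/2)
        = b^2*x + b^3*x^2/2 := by ring
    have e1 : (0:ℝ) < b^2*x := mul_pos (by positivity) hx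
    have e2 : (0:ℝ) ≤ b^3*x^2/2 := by positivity
    have h4 : (1 + b + b*x + b^2*x^2/2) < (1+b) * (1 + b*x + (b*x)^2/2) := by linarith
    exact h4.trans_le (mul_le_mul_of_nonneg_left hq (le_of_lt hb1))
  have h2 : Real.exp (-(b*x)) = (Real.exp (b*x))⁻¹ := by rw [← Real.exp_neg]
  rw [h2, mul_inv_lt_iff₀ (Real.exp_pos _)]
  linarith [h1]

end Helpers

theorem L1_integral_eq_series (a b c δ t : ℝ) (ha : 0 < a) (hb : 0 < b) (hδ : 0 < δ)
    (hc : 0 ≤ c) (ht : 0 < t) :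
    IntegrableOn (fun x : ℝ => x ^ c * Real.exp (-δ * x) * (U b x) ^ (a - 1))
      (Set.Ioi t) ∧
    HasSum (fun i : ℕ => L1term a b c δ t i)
      (∫ x in Set.Ioi t, x ^ c * Real.exp (-δ * x) * (U b x) ^ (a - 1)) := by
  have hb1 : (0:ℝ) < 1 + b := by linarith
  set yb : ℝ → ℝ := fun x => (1 + b + b*x + b^2*x^2/2) * Real.exp (-(b*x)) / (1+b) with hyb
  have hU : ∀ x, U b x = 1 - yb x := by
    intro x
    simp only [U, hyb, neg_mul]
  have hy_nonneg : ∀ x : ℝ, 0 ≤ x → 0 ≤ yb x := by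
    intro x hx
    have hP : (0:ℝ) ≤ 1 + b + b*x + b^2*x^2/2 := by nlinarith
    exact div_nonneg (mul_nonneg hP (Real.exp_pos _).le) hb1.le
  have hy_lt : ∀ x : ℝ, 0 < x → yb x < 1 := fun x hx => P_exp_lt hb hx
  set q : ℝ := yb t with hqdef
  have hq0 : 0 ≤ q := hy_nonneg t ht.le
  have hq1 : q < 1 := hy_lt t ht
  have hy_le : ∀ x : ℝ, t ≤ x → yb x ≤ q := by
    intro x hx
    simp only [hyb, hqdef]
    exact (div_le_div_iff_of_pos_right hb1).mpr (P_exp_mono hb ht.le hx)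
  set M : ℝ → ℝ := fun x => x ^ c * Real.exp (-(δ * x)) with hM
  set f : ℕ → ℝ → ℝ := fun i x => genChoose (a-1) i * (-(yb x))^i * M x with hf
  have hIeq : ∀ x : ℝ, x ^ c * Real.exp (-δ * x) * U b x ^ (a - 1) = (1 - yb x)^(a-1) * M x := by
    intro x
    rw [hU x]
    simp only [hM, neg_mul]
    ring
  have hMint : IntegrableOn M (Ioi t) := integrableOn_rpow_exp hc hδ ht
  have hMcont : ContinuousOn M (Ioi t) := by
    apply ContinuousOn.mul
    · exact continuousOn_id.rpow_const (fun x hx => Or.inl (ne_of_gt (ht.trans hx)))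
    · exact (Real.continuous_exp.comp (continuous_const.mul continuous_id).neg).continuousOn
  have hMnn : ∀ x : ℝ, 0 < x → 0 ≤ M x := by
    intro x hx
    exact mul_nonneg (Real.rpow_nonneg hx.le c) (Real.exp_pos _).le
  have hycont : Continuous yb := by
    have h1 : Continuous fun x : ℝ => (1 + b + b*x + b^2*x^2/2) * Real.exp (-(b*x)) := by
      fun_prop
    exact h1.div_const (1+b)
  -- pointwise expansion into the binomial series
  have hpoint : ∀ x ∈ Ioi t, HasSum (fun i => f i x) ((1 - yb x)^(a-1) * M x) := by
    intro x hx
    have hx0 : (0:ℝ) < x := ht.trans hx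
    exact (hasSum_genChoose (a-1) (hy_nonneg x hx0.le) (hy_lt x hx0)).mul_right (M x)
  -- integrability of each term
  have hfint : ∀ i, IntegrableOn (f i) (Ioi t) := by
    intro i
    have hmeas : AEStronglyMeasurable (f i) (volume.restrict (Ioi t)) := by
      apply ContinuousOn.aestronglyMeasurable ?_ measurableSet_Ioi
      apply ContinuousOn.mul
      · exact (continuous_const.mul ((hycont.neg).pow i)).continuousOn
      · exact hMcont
    refine Integrable.mono (hMint.const_mul (|genChoose (a-1) i|)) hmeas ?_
    refine (ae_restrict_iff' measurableSet_Ioi).mpr (Eventually.of_forall fun x hx => ?_)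
    have hx0 : (0:ℝ) < x := ht.trans hx
    have h1 : 0 ≤ yb x := hy_nonneg x hx0.le
    have h2 : yb x ≤ 1 := (hy_lt x hx0).le
    have h3 : 0 ≤ M x := hMnn x hx0
    simp only [hf, Real.norm_eq_abs]
    rw [abs_mul, abs_mul, abs_pow, abs_neg, abs_of_nonneg h1, abs_of_nonneg h3,
      abs_mul, abs_of_nonneg h3, abs_abs]
    have h4 : yb x ^ i ≤ 1 := pow_le_one₀ h1 h2
    nlinarith [abs_nonneg (genChoose (a-1) i), mul_nonneg (abs_nonneg (genChoose (a-1) i)) h3]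
  set K : ℝ := ∫ x in Ioi t, M x with hK
  have hKnn : 0 ≤ K := setIntegral_nonneg measurableSet_Ioi (fun x hx => hMnn x (ht.trans hx))
  -- summability of integrals of norms
  have hnorm_le : ∀ i, (∫ x in Ioi t, ‖f i x‖) ≤ (|genChoose (a-1) i| * q^i) * K := by
    intro i
    have h1 : ∀ x ∈ Ioi t, ‖f i x‖ ≤ (|genChoose (a-1) i| * q^i) * M x := by
      intro x hx
      have hx0 : (0:ℝ) < x := ht.trans hx
      have hy1 : 0 ≤ yb x := hy_nonneg x hx0.le
      have hy2 : yb x ≤ q := hy_le x (le_of_lt hx)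
      have h3 : 0 ≤ M x := hMnn x hx0
      simp only [hf, Real.norm_eq_abs]
      rw [abs_mul, abs_mul, abs_pow, abs_neg, abs_of_nonneg hy1, abs_of_nonneg h3]
      have h4 : yb x ^ i ≤ q ^ i := pow_le_pow_left₀ hy1 hy2 i
      have h5 : |genChoose (a-1) i| * yb x ^ i ≤ |genChoose (a-1) i| * q ^ i :=
        mul_le_mul_of_nonneg_left h4 (abs_nonneg _)
      exact mul_le_mul_of_nonneg_right h5 h3
    calc (∫ x in Ioi t, ‖f i x‖)
        ≤ ∫ x in Ioi t, (|genChoose (a-1) i| * q^i) * M x :=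
          setIntegral_mono_on ((hfint i).norm) (hMint.const_mul _) measurableSet_Ioi h1
      _ = (|genChoose (a-1) i| * q^i) * K := by rw [integral_const_mul, hK]
  have hsummable_norm : Summable (fun i => ∫ x in Ioi t, ‖f i x‖) := by
    refine Summable.of_nonneg_of_le (fun i => integral_nonneg (fun x => norm_nonneg _))
      (fun i => ?_) ((summable_genChoose_aux (a-1) hq0 hq1).mul_right K)
    refine (hnorm_le i).trans ?_
    have h6 : |genChoose (a-1) i| * q ^ i ≤ |genChoose (a-1) i| * (i+1) * q ^ i := by
      have := mul_le_mul_of_nonneg_right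
        (le_mul_of_one_le_right (abs_nonneg (genChoose (a-1) i))
          (le_add_of_nonneg_left (Nat.cast_nonneg i))) (pow_nonneg hq0 i)
      exact this
    exact mul_le_mul_of_nonneg_right h6 hKnn
  have hHasSum := hasSum_integral_of_summable_integral_norm hfint hsummable_norm
  -- integrability of the full integrand
  have hCU : ∀ x ∈ Ioi t, (1 - yb x)^(a-1) ≤ max 1 ((1-q)^(a-1)) := by
    intro x hx
    have hx0 : (0:ℝ) < x := ht.trans hx
    have hy1 : 0 ≤ yb x := hy_nonneg x hx0.le
    have hy2 : yb x ≤ q := hy_le x (le_of_lt hx)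
    have hpos : 0 < 1 - yb x := by
      have := hy_lt x hx0; linarith
    rcases le_or_gt 0 (a-1) with hr | hr
    · refine le_trans ?_ (le_max_left _ _)
      exact Real.rpow_le_one hpos.le (by linarith) hr
    · refine le_trans ?_ (le_max_right _ _)
      exact Real.rpow_le_rpow_of_nonpos (by linarith) (by linarith) hr.le
  have hIcont : ContinuousOn (fun x : ℝ => (1 - yb x)^(a-1) * M x) (Ioi t) := by
    apply ContinuousOn.mul
    · refine ContinuousOn.rpow_const (continuous_const.sub hycont).continuousOn ?_
      intro x hx
      have := hy_lt x (ht.trans hx)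
      exact Or.inl (by linarith)
    · exact hMcont
  have hIint : IntegrableOn (fun x : ℝ => (1 - yb x)^(a-1) * M x) (Ioi t) := by
    refine Integrable.mono (hMint.const_mul (max 1 ((1-q)^(a-1))))
      (hIcont.aestronglyMeasurable measurableSet_Ioi) ?_
    refine (ae_restrict_iff' measurableSet_Ioi).mpr (Eventually.of_forall fun x hx => ?_)
    have hx0 : (0:ℝ) < x := ht.trans hx
    have hpos : 0 < 1 - yb x := by have := hy_lt x hx0; linarith
    have h3 : 0 ≤ M x := hMnn x hx0
    have hCUnn : (0:ℝ) ≤ max 1 ((1-q)^(a-1)) :=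
      le_trans (by norm_num : (0:ℝ) ≤ 1) (le_max_left _ _)
    calc ‖(1 - yb x)^(a-1) * M x‖ = (1 - yb x)^(a-1) * M x := by
          rw [Real.norm_eq_abs,
            abs_of_nonneg (mul_nonneg (Real.rpow_nonneg hpos.le _) h3)]
      _ ≤ (max 1 ((1-q)^(a-1))) * M x := mul_le_mul_of_nonneg_right (hCU x hx) h3
      _ = ‖(max 1 ((1-q)^(a-1))) * M x‖ := by
          rw [Real.norm_eq_abs, abs_of_nonneg (mul_nonneg hCUnn h3)]
  have hIint' : IntegrableOn (fun x : ℝ => x ^ c * Real.exp (-δ * x) * U b x ^ (a - 1)) (Ioi t) :=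
    hIint.congr_fun (fun x _ => (hIeq x).symm) measurableSet_Ioi
  refine ⟨hIint', ?_⟩
  -- identify the integral of the tsum
  have htsum_eq : ∀ x ∈ Ioi t, (∑' i, f i x) = x ^ c * Real.exp (-δ * x) * U b x ^ (a - 1) := by
    intro x hx
    rw [(hpoint x hx).tsum_eq, hIeq x]
  have hint_eq : (∫ x in Ioi t, ∑' i, f i x)
      = ∫ x in Ioi t, x ^ c * Real.exp (-δ * x) * U b x ^ (a - 1) :=
    setIntegral_congr_fun measurableSet_Ioi htsum_eq
  rw [← hint_eq]
  -- finally identify each term integral with L1term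
  have hterm : ∀ i : ℕ, (∫ x in Ioi t, f i x) = L1term a b c δ t i := by
    intro i
    have hμ : (0:ℝ) < b * i + δ := by positivity
    have hexp : ∀ x ∈ Ioi t, f i x
        = ∑ j ∈ Finset.range (i+1), ∑ k ∈ Finset.range (j+1), ∑ l ∈ Finset.range (k+1),
            (genChoose (a-1) i * (i.choose j) * (j.choose k) * (k.choose l) * (-1 : ℝ)^i * b^j
              * (b/2)^l / (1+b)^i) * (x ^ (c + (k:ℝ) + l) * Real.exp (-((b*i+δ)*x))) := by
      intro x hx
      have hx0 : (0:ℝ) < x := ht.trans hx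
      simp only [hf, hyb, hM]
      rw [neg_pow, div_pow, mul_pow, ← Real.exp_nat_mul, trinomial_pow]
      simp only [Finset.sum_mul, Finset.mul_sum, Finset.sum_div]
      refine Finset.sum_congr rfl fun j _ => ?_
      refine Finset.sum_congr rfl fun k _ => ?_
      refine Finset.sum_congr rfl fun l _ => ?_
      rw [show x ^ (c + (k:ℝ) + (l:ℝ)) = x ^ c * x ^ ((k+l : ℕ)) by
        rw [← Real.rpow_natCast x (k+l), ← Real.rpow_add hx0]; congr 1; push_cast; ring]
      rw [show Real.exp (-((b*(i:ℝ)+δ)*x)) = Real.exp ((i:ℝ) * -(b*x)) * Real.exp (-(δ*x)) by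
        rw [← Real.exp_add]; congr 1; ring]
      ring
    rw [setIntegral_congr_fun measurableSet_Ioi hexp]
    have hTint : ∀ (k l : ℕ) (C : ℝ), IntegrableOn
        (fun x => C * (x ^ (c + (k:ℝ) + l) * Real.exp (-((b*i+δ)*x)))) (Ioi t) := by
      intro k l C
      have hs : (0:ℝ) ≤ c + (k:ℝ) + l := by positivity
      exact (integrableOn_rpow_exp hs hμ ht).const_mul C
    rw [integral_finset_sum _ (fun j _ => integrable_finset_sum _
      (fun k _ => integrable_finset_sum _ (fun l _ => hTint k l _)))]
    refine Finset.sum_congr rfl fun j _ => ?_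
    rw [integral_finset_sum _ (fun k _ => integrable_finset_sum _ (fun l _ => hTint k l _))]
    refine Finset.sum_congr rfl fun k _ => ?_
    rw [integral_finset_sum _ (fun l _ => hTint k l _)]
    refine Finset.sum_congr rfl fun l _ => ?_
    have hs : (0:ℝ) ≤ c + (k:ℝ) + l := by positivity
    rw [integral_const_mul, integral_rpow_exp hs hμ ht,
      show (b*(i:ℝ)+δ)*t = t*(b*(i:ℝ)+δ) from mul_comm _ _]
    ring
  have h9 : (fun i => ∫ x in Ioi t, f i x) = fun i => L1term a b c δ t i := funext hterm
  rw [← h9]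
  exact hHasSum
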